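/- Let n ≥ 2, λ < -n/2, and fix unit vectors η, ζ ∈ ℝⁿ. For r ∈ [0,1), the derivative in r of (1-r²)^(1+2λ)/|rη - ζ|^(n+2λ) satisfies ((n+2λ+(n-2λ-2)r)(1-r²)^(2λ))/|rη-ζ|^(n+2λ) ≤ d/dr ≤ -((n+2λ-(n-2λ-2)r)(1-r²)^(2λ))/|rη-ζ|^(n+2λ). -/

import Mathlib

theorem stmt6 (n : ℕ) (hn : 2 ≤ n) (l : ℝ) (hl : l < -(n / 2 : ℝ))
    (η ζ : EuclideanSpace ℝ (Fin n)) (hη : ‖η‖ = 1) (hζ : ‖ζ‖ = 1)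
    (r : ℝ) (hr : r ∈ Set.Ico (0:ℝ) 1) (d : ℝ)
    (hd : HasDerivAt (fun s : ℝ => (1 - s ^ 2) ^ (1 + 2 * l) / ‖s • η - ζ‖ ^ ((n : ℝ) + 2 * l)) d r) :
    ((n + 2 * l + (n - 2 * l - 2) * r) * (1 - r ^ 2) ^ (2 * l)) / ‖r • η - ζ‖ ^ ((n : ℝ) + 2 * l) ≤ d ∧
      d ≤ -((n + 2 * l - (n - 2 * l - 2) * r) * (1 - r ^ 2) ^ (2 * l)) / ‖r • η - ζ‖ ^ ((n : ℝ) + 2 * l) := by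
  obtain ⟨hr0, hr1⟩ := hr
  have hb : (n : ℝ) + 2 * l < 0 := by
    have hn' : (2:ℝ) ≤ (n:ℝ) := by exact_mod_cast hn
    have h2 : l < -((n:ℝ)/2) := hl
    linarith
  set t : ℝ := inner ℝ η ζ with ht
  have ht1 : |t| ≤ 1 := by
    have h := abs_real_inner_le_norm η ζ
    rw [hη, hζ] at h
    simpa [ht] using h
  obtain ⟨htm, htp⟩ := abs_le.1 ht1
  have hAsq : ∀ s : ℝ, ‖s • η - ζ‖ ^ 2 = s ^ 2 - 2 * s * t + 1 := by
    intro s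
    have h1 : ‖s • η - ζ‖ ^ 2 = ‖s • η‖ ^ 2 - 2 * inner ℝ (s • η) ζ + ‖ζ‖ ^ 2 :=
      norm_sub_sq_real _ _
    rw [h1, real_inner_smul_left, ← ht, hζ, norm_smul, hη, Real.norm_eq_abs,
      mul_one, sq_abs]
    ring
  have hAnn : ∀ s : ℝ, 0 ≤ s ^ 2 - 2 * s * t + 1 := fun s => by
    rw [← hAsq s]; positivity
  have hnorm : ∀ s : ℝ, ‖s • η - ζ‖ = Real.sqrt (s ^ 2 - 2 * s * t + 1) := fun s => by
    rw [← hAsq s, Real.sqrt_sq (norm_nonneg _)]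
  have hApos : 0 < r ^ 2 - 2 * r * t + 1 := by nlinarith [sq_nonneg (1 - r)]
  have h1r2 : 0 < 1 - r ^ 2 := by nlinarith
  have hrpow : ∀ s : ℝ, ‖s • η - ζ‖ ^ ((n:ℝ) + 2 * l)
      = (s ^ 2 - 2 * s * t + 1) ^ (((n:ℝ) + 2 * l) / 2) := by
    intro s
    rw [hnorm s, Real.sqrt_eq_rpow, ← Real.rpow_mul (hAnn s)]
    congr 1
    ring
  have hfun : (fun s : ℝ => (1 - s ^ 2) ^ (1 + 2 * l) / ‖s • η - ζ‖ ^ ((n : ℝ) + 2 * l))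
      = fun s : ℝ => (1 - s ^ 2) ^ (1 + 2 * l) / (s ^ 2 - 2 * s * t + 1) ^ (((n:ℝ) + 2 * l) / 2) := by
    funext s; rw [hrpow s]
  rw [hfun] at hd
  have hu : HasDerivAt (fun s : ℝ => 1 - s ^ 2) (-(2 * r)) r := by
    simpa using (hasDerivAt_pow 2 r).const_sub 1
  have hU : HasDerivAt (fun s : ℝ => (1 - s ^ 2) ^ (1 + 2 * l))
      (-(2 * r) * (1 + 2 * l) * (1 - r ^ 2) ^ (1 + 2 * l - 1)) r :=
    hu.rpow_const (Or.inl h1r2.ne')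
  have hv : HasDerivAt (fun s : ℝ => s ^ 2 - 2 * s * t + 1) (2 * r - 2 * t) r := by
    have h1 := ((hasDerivAt_pow 2 r).sub (((hasDerivAt_id r).const_mul 2).mul_const t)).add_const 1
    simpa using h1
  have hV : HasDerivAt (fun s : ℝ => (s ^ 2 - 2 * s * t + 1) ^ (((n:ℝ) + 2 * l) / 2))
      ((2 * r - 2 * t) * (((n:ℝ) + 2 * l) / 2)
        * (r ^ 2 - 2 * r * t + 1) ^ (((n:ℝ) + 2 * l) / 2 - 1)) r :=
    hv.rpow_const (Or.inl hApos.ne')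
  have hVpos : 0 < (r ^ 2 - 2 * r * t + 1) ^ (((n:ℝ) + 2 * l) / 2) :=
    Real.rpow_pos_of_pos hApos _
  have hPpos : 0 < (1 - r ^ 2) ^ (2 * l) := Real.rpow_pos_of_pos h1r2 _
  have hD := hU.div hV hVpos.ne'
  have hdval := hd.unique hD
  set A : ℝ := r ^ 2 - 2 * r * t + 1 with hAd
  set V : ℝ := A ^ (((n:ℝ) + 2 * l) / 2) with hVd
  set P : ℝ := (1 - r ^ 2) ^ (2 * l) with hPd
  set Q : ℝ := (1 - r ^ 2) * (r - t) / A with hQd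
  have hP1 : (1 - r ^ 2) ^ (1 + 2 * l - 1) = P := by
    rw [hPd]; congr 1; ring
  have hUP : (1 - r ^ 2) ^ (1 + 2 * l) = (1 - r ^ 2) * P := by
    rw [Real.rpow_add h1r2, Real.rpow_one, ← hPd]
  have hVA : A ^ (((n:ℝ) + 2 * l) / 2 - 1) = V / A := by
    rw [Real.rpow_sub hApos, Real.rpow_one, ← hVd]
  rw [hP1, hUP, hVA] at hdval
  have hdQ : d = P / V * (-(2 * r) * (1 + 2 * l) - ((n:ℝ) + 2 * l) * Q) := by
    rw [hdval, hQd]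
    field_simp
  have hden : ‖r • η - ζ‖ ^ ((n:ℝ) + 2 * l) = V := by
    rw [hrpow r, ← hAd, ← hVd]
  rw [hden, hdQ]
  clear_value A V P Q
  have hQ1 : -(1 + r) ≤ Q := by
    rw [hQd, le_div_iff₀ hApos, hAd]
    nlinarith [mul_nonneg (sq_nonneg (1 + r)) (by linarith : (0:ℝ) ≤ 1 - t)]
  have hQ2 : Q ≤ 1 - r := by
    rw [hQd, div_le_iff₀ hApos, hAd]
    nlinarith [mul_nonneg (sq_nonneg (1 - r)) (by linarith : (0:ℝ) ≤ 1 + t)]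
  have hg1 : (n:ℝ) + 2 * l + ((n:ℝ) - 2 * l - 2) * r
      ≤ -(2 * r) * (1 + 2 * l) - ((n:ℝ) + 2 * l) * Q := by
    have h := mul_le_mul_of_nonpos_left hQ1 hb.le
    linarith [h]
  have hg2 : -(2 * r) * (1 + 2 * l) - ((n:ℝ) + 2 * l) * Q
      ≤ -((n:ℝ) + 2 * l) + ((n:ℝ) - 2 * l - 2) * r := by
    have h := mul_le_mul_of_nonpos_left hQ2 hb.le
    linarith [h]
  clear hd hD hdval hfun hAsq hnorm hrpow hV hv hu hU hAnn hQd hAd ht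
  clear_value t
  constructor
  · rw [div_mul_eq_mul_div]
    apply div_le_div_of_nonneg_right _ hVpos.le
    linarith [mul_le_mul_of_nonneg_left hg1 hPpos.le]
  · rw [div_mul_eq_mul_div]
    apply div_le_div_of_nonneg_right _ hVpos.le
    linarith [mul_le_mul_of_nonneg_left hg2 hPpos.le]
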